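/- For the d×d Werner state ρ_d, SIC inputs, and coefficients β_{st} = (d(d+1)δ_{st}−1)/d³, the quantity I := Σ_{s,t=1}^{d²} β_{st}·tr[(|φ_s⟩⟨φ_s|^T/d)⊗(|φ_t⟩⟨φ_t|^T/d)·ρ_d] equals (1−v(d+1))/d⁴, which is negative if and only if v > 1/(d+1). -/

import Mathlib

open Matrix Kronecker

noncomputable section

/-- The flip (swap) operator `F = Σ_{i,j} |ij⟩⟨ji|` on `ℂ^d ⊗ ℂ^d`. -/
def swapF (d : ℕ) : Matrix (Fin d × Fin d) (Fin d × Fin d) ℂ :=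
  Matrix.of fun p q => if p.1 = q.2 ∧ p.2 = q.1 then 1 else 0

/-- The `d × d` Werner state `ρ_d = v (𝟙−F)/(d(d−1)) + (1−v) 𝟙/d²`. -/
def rhoW (d : ℕ) (v : ℝ) : Matrix (Fin d × Fin d) (Fin d × Fin d) ℂ :=
  ((v / (d * (d - 1)) : ℝ) : ℂ) • (1 - swapF d)
    + (((1 - v) / d^2 : ℝ) : ℂ) • 1

lemma trace_kron_swap (d : ℕ) (A B : Matrix (Fin d) (Fin d) ℂ) :
    ((A ⊗ₖ B) * swapF d).trace = (A * B).trace := by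
  simp only [Matrix.trace, Matrix.diag, Matrix.mul_apply, swapF, kroneckerMap_apply,
    Matrix.of_apply, Fintype.sum_prod_type, mul_ite, mul_one, mul_zero, ite_and]
  rw [Finset.sum_comm]
  simp [Finset.sum_ite_eq, Finset.sum_ite_eq']
  rw [Finset.sum_comm]

lemma trace_rank1 (d : ℕ) (x : Fin d → ℂ) :
    ((vecMulVec x (star x))ᵀ).trace = ∑ i, star (x i) * x i := by
  simp [Matrix.trace, Matrix.diag, vecMulVec_apply, mul_comm]

lemma trace_rank1_mul (d : ℕ) (x y : Fin d → ℂ) :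
    ((vecMulVec x (star x))ᵀ * (vecMulVec y (star y))ᵀ).trace
      = (Complex.normSq (∑ i, star (x i) * y i) : ℂ) := by
  have h : ((vecMulVec x (star x))ᵀ * (vecMulVec y (star y))ᵀ).trace
      = (∑ i, star (x i) * y i) * (∑ j, x j * star (y j)) := by
    rw [Finset.sum_mul_sum]
    simp only [Matrix.trace, Matrix.diag, Matrix.mul_apply, Matrix.transpose_apply,
      vecMulVec_apply, Pi.star_apply]
    apply Finset.sum_congr rfl; intro i _
    apply Finset.sum_congr rfl; intro j _
    ring
  rw [h]
  have h2 : ∑ j, x j * star (y j) = star (∑ i, star (x i) * y i) := by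
    rw [star_sum]
    apply Finset.sum_congr rfl; intro i _
    simp [mul_comm]
  rw [h2]; exact Complex.mul_conj _

lemma trace_term (d : ℕ) (v : ℝ) (x y : Fin d → ℂ)
    (hx : ∑ i, star (x i) * x i = 1) (hy : ∑ i, star (y i) * y i = 1) :
    ((((d : ℂ)⁻¹ • (vecMulVec x (star x))ᵀ) ⊗ₖ ((d : ℂ)⁻¹ • (vecMulVec y (star y))ᵀ)
        * rhoW d v)).trace
      = ((d:ℂ)⁻¹ * (d:ℂ)⁻¹) * (((v / (d * (d - 1)) : ℝ) : ℂ)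
          * (1 - (Complex.normSq (∑ i, star (x i) * y i) : ℂ))
        + (((1 - v) / d^2 : ℝ) : ℂ)) := by
  rw [rhoW, Matrix.smul_kronecker, Matrix.kronecker_smul, smul_smul]
  simp only [Matrix.mul_add, Matrix.mul_smul, Matrix.mul_sub, Matrix.mul_one,
    Matrix.smul_mul, Matrix.trace_add, Matrix.trace_smul, Matrix.trace_sub,
    Matrix.trace_kronecker, trace_kron_swap, trace_rank1, trace_rank1_mul, hx, hy,
    smul_eq_mul, mul_one]
  ring

set_option maxHeartbeats 1000000 in
set_option maxHeartbeats 1000000 in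
theorem wernerD_inequality_value (d : ℕ) (hd : 2 ≤ d) (v : ℝ)
    (φ : Fin (d^2) → Fin d → ℂ)
    (hunit : ∀ s, ∑ i, star (φ s i) * φ s i = 1)
    (hsic : ∀ s t, Complex.normSq (∑ i, star (φ s i) * φ t i)
      = ((if s = t then (d : ℝ) else 0) + 1) / ((d : ℝ) + 1)) :
    (∑ s, ∑ t,
      ((((d : ℝ) * ((d : ℝ) + 1) * (if s = t then 1 else 0) - 1) / (d : ℝ)^3 : ℝ) : ℂ) *
        ((((d : ℂ)⁻¹ • (vecMulVec (φ s) (star (φ s)))ᵀ)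
          ⊗ₖ ((d : ℂ)⁻¹ • (vecMulVec (φ t) (star (φ t)))ᵀ)) * rhoW d v).trace)
      = (((1 - v * ((d : ℝ) + 1)) / (d : ℝ)^4 : ℝ) : ℂ) ∧
    ((1 - v * ((d : ℝ) + 1)) / (d : ℝ)^4 < 0 ↔ v > 1/((d : ℝ) + 1)) := by
  have hdR : (2:ℝ) ≤ (d:ℝ) := by exact_mod_cast hd
  have hd0 : (d:ℂ) ≠ 0 := by
    exact_mod_cast Nat.cast_ne_zero.mpr (by omega)
  have hd1 : (d:ℂ) - 1 ≠ 0 := by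
    intro h
    have : (d:ℂ) = 1 := by linear_combination h
    have : (d:ℕ) = 1 := by exact_mod_cast this
    omega
  have hdp1 : (d:ℂ) + 1 ≠ 0 := by
    intro h
    have : ((d:ℝ) + 1 : ℂ) = 0 := by push_cast; linear_combination h
    have h2 : (d:ℝ) + 1 = 0 := by exact_mod_cast this
    linarith
  constructor
  · set E : ℂ := (-1/(d:ℂ)^3) * (((v / (d * ((d:ℝ) - 1)) : ℝ) : ℂ)
        * (1 - 1/((d:ℂ)+1)) + (((1 - v) / (d:ℝ)^2 : ℝ) : ℂ)) / ((d:ℂ)^2) with hE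
    set G : ℂ := (((d:ℂ)*((d:ℂ)+1)-1)/(d:ℂ)^3) * ((((1 - v) / (d:ℝ)^2 : ℝ) : ℂ)) / ((d:ℂ)^2)
        - E with hG
    have key : ∀ s t : Fin (d^2),
        ((((d : ℝ) * ((d : ℝ) + 1) * (if s = t then 1 else 0) - 1) / (d : ℝ)^3 : ℝ) : ℂ) *
          ((((d : ℂ)⁻¹ • (vecMulVec (φ s) (star (φ s)))ᵀ)
            ⊗ₖ ((d : ℂ)⁻¹ • (vecMulVec (φ t) (star (φ t)))ᵀ)) * rhoW d v).trace
        = E + (if s = t then G else 0) := by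
      intro s t
      rw [trace_term d v (φ s) (φ t) (hunit s) (hunit t), hsic s t]
      split_ifs with h
      · rw [hG, hE]; push_cast; field_simp; ring
      · rw [hE]; push_cast; field_simp; ring
    rw [Finset.sum_congr rfl fun s _ => Finset.sum_congr rfl fun t _ => key s t]
    simp only [Finset.sum_add_distrib, Finset.sum_const, Finset.card_univ, Fintype.card_fin,
      Finset.sum_ite_eq, Finset.mem_univ, if_true, nsmul_eq_mul]
    have hfac : (-(d:ℂ)^8 + (d:ℂ)^10) ≠ 0 := by
      have h : (-(d:ℂ)^8 + (d:ℂ)^10) = (d:ℂ)^8*((d:ℂ)-1)*((d:ℂ)+1) := by ring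
      rw [h]; exact mul_ne_zero (mul_ne_zero (pow_ne_zero _ hd0) hd1) hdp1
    rw [hG, hE]; push_cast; field_simp
    ring_nf
  · have hpow : (0:ℝ) < (d:ℝ)^4 := by positivity
    have hdp : (0:ℝ) < (d:ℝ) + 1 := by linarith
    rw [div_neg_iff]
    constructor
    · rintro (⟨_, h2⟩ | ⟨h1, _⟩)
      · linarith
      · rw [gt_iff_lt, div_lt_iff₀ hdp]
        linarith
    · intro h
      right
      refine ⟨?_, hpow⟩
      rw [gt_iff_lt, div_lt_iff₀ hdp] at h
      linarith
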